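/- arXiv:2212.01860 — 2 statements merged into one kernel-verified Lean document; each statement's English description precedes it below -/
import Mathlib

section
/- There exists a finite simple graph G and a vertex v of G with deg_G(v) ≥ 1 such that γst(G − v) = γst(G) − deg_G(v); that is, the lower bound γst(G) − deg_G(v) ≤ γst(G − v) is tight. -/
/-- The degree of a vertex `x` in a graph `G`. -/
noncomputable def sdeg {V : Type*} (G : SimpleGraph V) (x : V) : ℕ :=
  (G.neighborSet x).ncard

/-- `D` is a strong dominating set of `G`: every vertex `x ∉ D` has a neighbor
`y ∈ D` with `deg x ≤ deg y`. -/
def IsStrongDominating {V : Type*} (G : SimpleGraph V) (D : Set V) : Prop :=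
  ∀ x ∉ D, ∃ y ∈ D, G.Adj x y ∧ sdeg G x ≤ sdeg G y

/-- The strong domination number of `G`. -/
noncomputable def sdn {V : Type*} (G : SimpleGraph V) : ℕ :=
  sInf {n | ∃ D : Set V, IsStrongDominating G D ∧ D.ncard = n}

/-- Vertex deletion `G - v`: the induced subgraph on the complement of `{v}`. -/
def delVtx {V : Type*} (G : SimpleGraph V) (v : V) : SimpleGraph {x : V // x ≠ v} where
  Adj a b := G.Adj a.1 b.1
  symm := ⟨fun a b h => G.adj_symm h⟩
  loopless := ⟨fun a h => G.irrefl h⟩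

/-- Vertex contraction `G / v`: delete `v` and put a clique on its open neighborhood. -/
def contractVtx {V : Type*} (G : SimpleGraph V) (v : V) : SimpleGraph {x : V // x ≠ v} where
  Adj a b := a ≠ b ∧ (G.Adj a.1 b.1 ∨ (G.Adj v a.1 ∧ G.Adj v b.1))
  symm := by
    constructor
    rintro a b ⟨hab, h | ⟨ha, hb⟩⟩
    · exact ⟨hab.symm, Or.inl h.symm⟩
    · exact ⟨hab.symm, Or.inr ⟨hb, ha⟩⟩
  loopless := by constructor; rintro a ⟨h, -⟩; exact h rfl

/-- `G ⊙ v`: remove all edges between any pair of neighbors of `v`. -/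
def odotVtx {V : Type*} (G : SimpleGraph V) (v : V) : SimpleGraph V where
  Adj x y := G.Adj x y ∧ ¬(G.Adj v x ∧ G.Adj v y)
  symm := by
    constructor
    rintro x y ⟨h, hn⟩
    exact ⟨h.symm, fun hc => hn ⟨hc.2, hc.1⟩⟩
  loopless := by constructor; rintro x ⟨h, -⟩; exact G.irrefl h

/-- Edge contraction `G / uv`: merge `v` into `u`. -/
def contractEdge {V : Type*} (G : SimpleGraph V) (u v : V) : SimpleGraph {x : V // x ≠ v} where
  Adj a b := a ≠ b ∧ (G.Adj a.1 b.1 ∨ (a.1 = u ∧ G.Adj v b.1) ∨ (b.1 = u ∧ G.Adj v a.1))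
  symm := by
    constructor
    rintro a b ⟨hab, h | h | h⟩
    · exact ⟨hab.symm, Or.inl h.symm⟩
    · exact ⟨hab.symm, Or.inr (Or.inr h)⟩
    · exact ⟨hab.symm, Or.inr (Or.inl h)⟩
  loopless := by constructor; rintro a ⟨h, -⟩; exact h rfl

/-- The star `K_{1,n}` with center `none` and leaves `some i`. -/
def starG (n : ℕ) : SimpleGraph (Option (Fin n)) where
  Adj a b := (a = none ∧ b ≠ none) ∨ (a ≠ none ∧ b = none)
  symm := by
    constructor
    rintro a b (⟨h1, h2⟩ | ⟨h1, h2⟩)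
    · exact Or.inr ⟨h2, h1⟩
    · exact Or.inl ⟨h2, h1⟩
  loopless := by
    constructor
    rintro a (⟨h1, h2⟩ | ⟨h1, h2⟩)
    exacts [h2 h1, h1 h2]

/-- The path graph `P_n` on vertices `0, …, n-1`, consecutive integers adjacent. -/
def pathG (n : ℕ) : SimpleGraph (Fin n) where
  Adj i j := i.1 + 1 = j.1 ∨ j.1 + 1 = i.1
  symm := ⟨fun i j h => h.symm⟩
  loopless := by constructor; rintro i (h | h) <;> omega



section Aux

lemma sdeg_pathG4_0 : sdeg (pathG 4) 0 = 1 := by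
  have h : (pathG 4).neighborSet 0 = {1} := by
    ext y; simp only [pathG, SimpleGraph.mem_neighborSet, Set.mem_singleton_iff, Fin.ext_iff]; simp; omega
  simp [sdeg, h]

lemma sdeg_pathG4_1 : sdeg (pathG 4) 1 = 2 := by
  have h : (pathG 4).neighborSet 1 = {0, 2} := by
    ext y; simp only [pathG, SimpleGraph.mem_neighborSet, Set.mem_insert_iff, Set.mem_singleton_iff, Fin.ext_iff]; simp; omega
  rw [sdeg, h, Set.ncard_pair (by decide)]

lemma sdeg_pathG4_2 : sdeg (pathG 4) 2 = 2 := by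
  have h : (pathG 4).neighborSet 2 = {1, 3} := by
    ext y; simp [pathG, SimpleGraph.neighborSet, Fin.ext_iff]; omega
  rw [sdeg, h, Set.ncard_pair (by decide)]

lemma sdeg_pathG4_3 : sdeg (pathG 4) 3 = 1 := by
  have h : (pathG 4).neighborSet 3 = {2} := by
    ext y; simp [pathG, SimpleGraph.neighborSet, Fin.ext_iff]; omega
  simp [sdeg, h]

lemma isd_pathG4 : IsStrongDominating (pathG 4) {1, 2} := by
  intro x hx
  simp only [Set.mem_insert_iff, Set.mem_singleton_iff, not_or] at hx
  have hx' : x = 0 ∨ x = 3 := by omega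
  rcases hx' with rfl | rfl
  · exact ⟨1, by simp, Or.inl rfl, by rw [sdeg_pathG4_0, sdeg_pathG4_1]; omega⟩
  · exact ⟨2, by simp, Or.inr rfl, by rw [sdeg_pathG4_3, sdeg_pathG4_2]; omega⟩

lemma sdn_pathG4 : sdn (pathG 4) = 2 := by
  unfold sdn
  have hne : {n | ∃ D : Set (Fin 4), IsStrongDominating (pathG 4) D ∧ D.ncard = n}.Nonempty :=
    ⟨2, {1, 2}, isd_pathG4, Set.ncard_pair (by decide)⟩
  apply le_antisymm
  · exact Nat.sInf_le ⟨{1, 2}, isd_pathG4, Set.ncard_pair (by decide)⟩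
  · apply le_csInf hne
    rintro m ⟨D, hD, rfl⟩
    have h01 : (0 : Fin 4) ∈ D ∨ (1 : Fin 4) ∈ D := by
      by_cases h0 : (0 : Fin 4) ∈ D
      · exact Or.inl h0
      · obtain ⟨y, hy, hadj, -⟩ := hD 0 h0
        have hadj' : (0 : Fin 4).1 + 1 = y.1 ∨ y.1 + 1 = (0 : Fin 4).1 := hadj
        have hy1 : y = 1 := by omega
        exact Or.inr (hy1 ▸ hy)
    have h23 : (3 : Fin 4) ∈ D ∨ (2 : Fin 4) ∈ D := by
      by_cases h3 : (3 : Fin 4) ∈ D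
      · exact Or.inl h3
      · obtain ⟨y, hy, hadj, -⟩ := hD 3 h3
        have hadj' : (3 : Fin 4).1 + 1 = y.1 ∨ y.1 + 1 = (3 : Fin 4).1 := hadj
        have hy1 : y = 2 := by omega
        exact Or.inr (hy1 ▸ hy)
    have hlt : 1 < D.ncard := by
      rw [Set.one_lt_ncard_iff (Set.toFinite D)]
      rcases h01 with ha | ha <;> rcases h23 with hb | hb
      · exact ⟨0, 3, ha, hb, by decide⟩
      · exact ⟨0, 2, ha, hb, by decide⟩
      · exact ⟨1, 3, ha, hb, by decide⟩
      · exact ⟨1, 2, ha, hb, by decide⟩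
    omega

lemma sdn_delVtx_pathG4 : sdn (delVtx (pathG 4) 3) = 1 := by
  unfold sdn
  have hdeg1 : sdeg (delVtx (pathG 4) 3) ⟨1, by decide⟩ = 2 := by
    have h : (delVtx (pathG 4) 3).neighborSet ⟨1, by decide⟩ =
        {⟨0, by decide⟩, ⟨2, by decide⟩} := by
      ext y
      simp only [delVtx, pathG, SimpleGraph.mem_neighborSet, Set.mem_insert_iff, Set.mem_singleton_iff, Subtype.ext_iff, Fin.ext_iff]; simp
      omega
    rw [sdeg, h, Set.ncard_pair (by simp [Subtype.ext_iff, Fin.ext_iff])]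
  have hdeg0 : sdeg (delVtx (pathG 4) 3) ⟨0, by decide⟩ = 1 := by
    have h : (delVtx (pathG 4) 3).neighborSet ⟨0, by decide⟩ = {⟨1, by decide⟩} := by
      ext y
      simp only [delVtx, pathG, SimpleGraph.mem_neighborSet, Set.mem_singleton_iff, Subtype.ext_iff, Fin.ext_iff]; simp
      omega
    simp [sdeg, h]
  have hdeg2 : sdeg (delVtx (pathG 4) 3) ⟨2, by decide⟩ = 1 := by
    have h : (delVtx (pathG 4) 3).neighborSet ⟨2, by decide⟩ = {⟨1, by decide⟩} := by
      ext y
      have h3 : y.1.1 ≠ 3 := by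
        intro hc
        exact y.2 (Fin.ext hc)
      simp [delVtx, pathG, SimpleGraph.neighborSet, Subtype.ext_iff, Fin.ext_iff]
      omega
    simp [sdeg, h]
  have hmem : (1 : ℕ) ∈ {n | ∃ D : Set {x : Fin 4 // x ≠ 3},
      IsStrongDominating (delVtx (pathG 4) 3) D ∧ D.ncard = n} := by
    refine ⟨{⟨1, by decide⟩}, ?_, Set.ncard_singleton _⟩
    intro x hx
    simp only [Set.mem_singleton_iff, Subtype.ext_iff] at hx
    have h3 : x.1 ≠ 3 := x.2
    have hx' : x = ⟨0, by decide⟩ ∨ x = ⟨2, by decide⟩ := by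
      rcases x with ⟨z, hz⟩
      simp only [Subtype.mk.injEq] at hx ⊢
      simp only at h3
      omega
    rcases hx' with rfl | rfl
    · exact ⟨⟨1, by decide⟩, Set.mem_singleton _, Or.inl rfl, by rw [hdeg0, hdeg1]; omega⟩
    · exact ⟨⟨1, by decide⟩, Set.mem_singleton _, Or.inr rfl, by rw [hdeg2, hdeg1]; omega⟩
  apply le_antisymm
  · exact Nat.sInf_le hmem
  · apply le_csInf ⟨1, hmem⟩
    rintro m ⟨D, hD, rfl⟩
    rw [Nat.one_le_iff_ne_zero]
    intro h0
    rw [Set.ncard_eq_zero (Set.toFinite D)] at h0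
    subst h0
    obtain ⟨y, hy, -⟩ := hD ⟨0, by decide⟩ (by simp)
    exact hy

end Aux

/-- the lower bound γst(G) − deg_G(v) ≤ γst(G − v) is tight. -/
theorem sdn_delVtx_lower_bound_tight :
    ∃ (n : ℕ) (G : SimpleGraph (Fin n)) (v : Fin n),
      1 ≤ sdeg G v ∧ (sdn (delVtx G v) : ℤ) = (sdn G : ℤ) - (sdeg G v : ℤ) := by
  refine ⟨4, pathG 4, 3, ?_, ?_⟩
  · rw [sdeg_pathG4_3]
  · rw [sdn_delVtx_pathG4, sdn_pathG4, sdeg_pathG4_3]; norm_num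
end

section
/- Let G be a finite simple graph and let v be a pendant vertex of G (i.e., deg_G(v) = 1) with unique neighbor u. Then γst(G/v) ≤ γst(G) + deg_G(u) − 1, where G/v is the vertex contraction of v in G (which, since v is pendant, equals G − v). -/
/-- if v is pendant with neighbor u, then γst(G/v) ≤ γst(G) + deg_G(u) − 1. -/
theorem sdn_contractVtx_pendant_le {V : Type*} [Fintype V] (G : SimpleGraph V) (u v : V)
    (huv : G.Adj u v) (hv : sdeg G v = 1) :
    (sdn (contractVtx G v) : ℤ) ≤ (sdn G : ℤ) + (sdeg G u : ℤ) - 1 := by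
  
  classical
  have huv' : u ≠ v := G.ne_of_adj huv
  -- the neighborhood of v is exactly {u}
  have hNv : G.neighborSet v = {u} := by
    obtain ⟨a, ha⟩ := Set.ncard_eq_one.mp hv
    have hu : u ∈ G.neighborSet v := huv.symm
    rw [ha] at hu ⊢
    simp only [Set.mem_singleton_iff] at hu
    rw [hu]
  have hadj : ∀ a b : {x : V // x ≠ v}, (contractVtx G v).Adj a b ↔ G.Adj a.1 b.1 := by
    intro a b
    constructor
    · rintro ⟨hne, h | ⟨h1, h2⟩⟩
      · exact h
      · exfalso
        have ha : a.1 ∈ G.neighborSet v := h1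
        have hb : b.1 ∈ G.neighborSet v := h2
        rw [hNv] at ha hb
        exact hne (Subtype.ext (ha.trans hb.symm))
    · intro h
      exact ⟨fun he => G.irrefl (he ▸ h), Or.inl h⟩
  have hnb : ∀ x : {x : V // x ≠ v},
      (contractVtx G v).neighborSet x = Subtype.val ⁻¹' (G.neighborSet x.1) := by
    intro x
    ext b
    exact hadj x b
  have hval : ∀ (S : Set V),
      (Subtype.val ⁻¹' S : Set {x : V // x ≠ v}).ncard = (S \ {v}).ncard := by
    intro S
    rw [← Set.ncard_image_of_injective _ Subtype.val_injective,
      Set.image_preimage_eq_inter_range, Subtype.range_coe_subtype]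
    congr 1
  have hdeg_le : ∀ x : {x : V // x ≠ v}, sdeg (contractVtx G v) x ≤ sdeg G x.1 := by
    intro x
    rw [sdeg, hnb, hval]
    exact Set.ncard_le_ncard Set.diff_subset (Set.toFinite _)
  have hdeg_eq : ∀ x : {x : V // x ≠ v}, x.1 ≠ u → sdeg (contractVtx G v) x = sdeg G x.1 := by
    intro x hxu
    rw [sdeg, hnb, hval, sdeg]
    congr 1
    rw [Set.diff_singleton_eq_self]
    intro hvmem
    have hx : x.1 ∈ G.neighborSet v := (G.mem_neighborSet x.1 v).mp hvmem |>.symm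
    rw [hNv] at hx
    exact hxu hx
  -- get an optimal strong dominating set of G
  have hneG : {n | ∃ D : Set V, IsStrongDominating G D ∧ D.ncard = n}.Nonempty :=
    ⟨(Set.univ : Set V).ncard, Set.univ, fun x hx => absurd (Set.mem_univ x) hx, rfl⟩
  obtain ⟨D, hD, hDcard⟩ := Nat.sInf_mem hneG
  have hDsdn : D.ncard = sdn G := hDcard
  set S : Set V := (D \ {v}) ∪ ((G.neighborSet u \ {v}) ∪ {u}) with hS
  have hvS : v ∉ S := by
    intro hvmem
    rcases hvmem with h | h | h
    · exact h.2 rfl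
    · exact h.2 rfl
    · exact huv' (Set.mem_singleton_iff.mp h).symm
  -- S (as a subset of the contracted graph) is strong dominating
  have hD' : IsStrongDominating (contractVtx G v) (Subtype.val ⁻¹' S) := by
    intro x hx
    simp only [Set.mem_preimage, hS, Set.mem_union, Set.mem_diff,
      Set.mem_singleton_iff, not_or, not_and, not_not] at hx
    obtain ⟨hx1, hx2, hx3⟩ := hx
    have hxD : x.1 ∉ D := fun h => x.2 (hx1 h)
    have hxN : x.1 ∉ G.neighborSet u := fun h => x.2 (hx2 h)
    have hxu : x.1 ≠ u := hx3
    obtain ⟨y, hyD, hxy, hdxy⟩ := hD x.1 hxD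
    have hyv : y ≠ v := by
      intro he
      subst he
      have : x.1 ∈ G.neighborSet y := hxy.symm
      rw [hNv] at this
      exact hxu this
    have hyu : y ≠ u := by
      intro he
      subst he
      exact hxN hxy.symm
    refine ⟨⟨y, hyv⟩, ?_, (hadj x ⟨y, hyv⟩).mpr hxy, ?_⟩
    · simp only [Set.mem_preimage, hS, Set.mem_union, Set.mem_diff, Set.mem_singleton_iff]
      exact Or.inl ⟨hyD, hyv⟩
    · calc sdeg (contractVtx G v) x ≤ sdeg G x.1 := hdeg_le x
        _ ≤ sdeg G y := hdxy
        _ = sdeg (contractVtx G v) ⟨y, hyv⟩ := (hdeg_eq ⟨y, hyv⟩ hyu).symm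
  have hle : sdn (contractVtx G v) ≤ (Subtype.val ⁻¹' S : Set {x : V // x ≠ v}).ncard :=
    Nat.sInf_le ⟨_, hD', rfl⟩
  rw [hval, Set.diff_singleton_eq_self hvS] at hle
  have hdegu : (G.neighborSet u \ {v}).ncard + 1 = sdeg G u :=
    Set.ncard_diff_singleton_add_one huv (Set.toFinite _)
  by_cases hvD : v ∈ D
  · have h1 : (D \ {v}).ncard + 1 = D.ncard :=
      Set.ncard_diff_singleton_add_one hvD (Set.toFinite _)
    have h2 : S.ncard ≤ (D \ {v}).ncard + (((G.neighborSet u \ {v}) ∪ {u}).ncard) :=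
      Set.ncard_union_le _ _
    have h3 : ((G.neighborSet u \ {v}) ∪ {u}).ncard ≤ (G.neighborSet u \ {v}).ncard + 1 := by
      have := Set.ncard_union_le (G.neighborSet u \ {v}) ({u} : Set V)
      simpa using this
    omega
  · -- v ∉ D forces u ∈ D
    have huD : u ∈ D := by
      obtain ⟨y, hyD, hvy, _⟩ := hD v hvD
      have : y ∈ G.neighborSet v := hvy
      rw [hNv] at this
      rwa [← this]
    have hsub : S ⊆ D ∪ (G.neighborSet u \ {v}) := by
      rintro x (h | h | h)
      · exact Or.inl h.1
      · exact Or.inr h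
      · exact Or.inl (Set.mem_singleton_iff.mp h ▸ huD)
    have h2 : S.ncard ≤ D.ncard + (G.neighborSet u \ {v}).ncard := by
      calc S.ncard ≤ (D ∪ (G.neighborSet u \ {v})).ncard :=
            Set.ncard_le_ncard hsub (Set.toFinite _)
        _ ≤ D.ncard + (G.neighborSet u \ {v}).ncard := Set.ncard_union_le _ _
    omega
end
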